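/- (Corollary 4: power scaling 1/(MN), no user aligned.) Let (M_t) and (N_t) be sequences of positive integers tending to infinity, fix E_u > 0 and set p_i(t) = E_u/(M_tN_t) for every i. Suppose there is C > 0 with |f_i(t)| ≤ C for all i and all t, and |b_{ki}(t)|/N_t → 0 for every i ≠ k. Then R̃_k(t) → log₂( 1 + ((ρ²/δ²)(μ_k+δ+1)² + μ_k + 1 − ρ²μ_k) / ( Σ_{i≠k} (α_i(μ_k+1)/(α_k(μ_i+1)))(μ_i+1−ρ²μ_i) + (σ_RF²+σ²)(μ_k+δ+1)(δ+1)(μ_k+1)/(E_uι²κ²τβα_kδ²) ) ) as t → ∞. -/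

import Mathlib

open MeasureTheory ProbabilityTheory Filter Finset

noncomputable section
/-- Coefficient `c_{k,1}`. -/
def ck1 (N : ℕ) (μk δ ρ : ℝ) (fk : ℂ) : ℝ :=
  (ρ^2*(μk+δ+1)^2 + (1-ρ^2)*δ^2*μk + δ^2) * (N:ℝ)^2
  + (((2*μk+3*δ+2-δ*μk)*ρ^2 + (1+μk)*δ) * δ*μk*‖fk‖^2
     + (μk+δ+2)^2 - ρ^2*(μk+δ+1)^2 - 2*ρ^2*δ*μk - 2) * (N:ℝ)
  + ρ^2*δ^2*μk^2*‖fk‖^4 + 2*((1-ρ^2)*(μk+δ)+2)*δ*μk*‖fk‖^2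

/-- Coefficient `c_{k,2}`. -/
def ck2 (μk δ ρ ι : ℝ) : ℝ :=
  ((1-ι^2)*(μk+δ+1)^2 - δ*μk*(μk+1+δ-ι^2*δ))*ρ^2 + (δ+μk+1)*δ*μk + (μk+δ+1)^2
  - (μk+1)*ι^2*δ^2

/-- Coefficient `c_{k,3}`. -/
def ck3 (μk δ ρ ι : ℝ) (fk : ℂ) : ℝ :=
  (((3-2*ι^2)*(μk+1) + (ι^2-1)*δ*(μk-3))*ρ^2 + (δ+1-ι^2*δ)*(μk+1)) * δ*μk*‖fk‖^2
  + ((ι^2-1)*(μk+δ+1)^2 + 2*(ι^2-2)*μk*δ)*ρ^2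
  + (1-ι^2)*(μk+δ+2)^2 + 2*μk*δ + 2*μk + 2*δ - 1 - 2*ι^2

/-- Coefficient `c_{k,4}`. -/
def ck4 (μk δ ρ ι : ℝ) (fk : ℂ) : ℝ :=
  (1-ι^2)*ρ^2*δ^2*μk^2*‖fk‖^4
  + 2*δ*μk*‖fk‖^2*((1-ι^2)*(1-ρ^2)*(μk+δ+1) + (2-ι^2)*(1+ρ^2))

/-- The closed-form second moment `ξ_k`. -/
def xiK (M N : ℕ) (αk μk β δ ρ ι κ : ℝ) (fk : ℂ) : ℝ :=
  (β^2*αk^2*κ^2*(M:ℝ)/((δ+1)^2*(μk+1)^2))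
    * (ck1 N μk δ ρ fk * ι^2 * (M:ℝ) + ck2 μk δ ρ ι * (N:ℝ)^2 + ck3 μk δ ρ ι fk * (N:ℝ)
       + ck4 μk δ ρ ι fk)

/-- Coefficient `z_{ki,1}`. -/
def zki1 (N : ℕ) (μk μi δ ρ : ℝ) (fk fi bki : ℂ) : ℝ :=
  (μi+1-ρ^2*μi)*δ^2*(N:ℝ)^2
  + ((μi+1-ρ^2*μi)*δ^2*μk*‖fk‖^2 + ρ^2*δ^2*μi*‖fi‖^2
     + (μk+2*δ+1)*(μi+1-ρ^2*μi) + ρ^2*μi) * (N:ℝ)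
  + (2*δ*‖fi‖^2 + μk*‖bki‖^2
     + 2*δ*μk*((starRingEnd ℂ) fk * fi * (starRingEnd ℂ) bki).re)*ρ^2*μi
  + (ρ^2*δ*μi*‖fi‖^2 + 2*μi*(1-ρ^2) + 2)*δ*μk*‖fk‖^2

/-- Coefficient `z_{ki,2}`. -/
def zki2 (μk μi δ ρ ι : ℝ) : ℝ :=
  ((δ+1)*μk + (δ+1)^2 - ι^2*δ^2)*(μi+1) - (μk+δ+1-ι^2*δ)*ρ^2*δ*μi - 1

/-- Coefficient `z_{ki,3}`. -/
def zki3 (μk μi δ ρ ι : ℝ) (fk fi : ℂ) : ℝ :=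
  ((1-ι^2)*δ*(μi+1-ρ^2*μi) + μi+1)*δ*μk*‖fk‖^2
  + ((μi+1)*(μk+2*δ+1) - (μk+2*δ)*ρ^2*μi)*(1-ι^2)
  + (μk+δ+1-ι^2*δ)*ρ^2*δ*μi*‖fi‖^2

/-- Coefficient `z_{ki,4}`. -/
def zki4 (μk μi δ ρ ι : ℝ) (fk fi bki : ℂ) : ℝ :=
  ((δ*‖fi‖^2-2)*ρ^2*μi + 2*μi + 2)*(1-ι^2)*δ*μk*‖fk‖^2
  + (1-ι^2)*ρ^2*μk*μi*(‖bki‖^2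
     + 2*δ*((starRingEnd ℂ) fk * fi * (starRingEnd ℂ) bki).re)
  + 2*(1-ι^2)*ρ^2*δ*μi*‖fi‖^2

/-- The closed-form interference second moment `γ_{ki}`. -/
def gammaKI (M N : ℕ) (αk αi μk μi β δ ρ ι κ : ℝ) (fk fi bki : ℂ) : ℝ :=
  (κ^2*β^2*αk*αi*(M:ℝ)/((δ+1)^2*(μk+1)*(μi+1)))
    * (zki1 N μk μi δ ρ fk fi bki * ι^2 * (M:ℝ) + zki2 μk μi δ ρ ι * (N:ℝ)^2
       + zki3 μk μi δ ρ ι fk fi * (N:ℝ) + zki4 μk μi δ ρ ι fk fi bki)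

/-- The quantity `ϖ_k`. -/
def varpiK (N : ℕ) (αk μk β δ : ℝ) (fk : ℂ) : ℝ :=
  (β*αk/((δ+1)*(μk+1))) * (δ*μk*‖fk‖^2 + (μk+δ+1)*(N:ℝ))

/-- The quantity `ζ`. -/
def zetaV (K N : ℕ) (p α μ : Fin K → ℝ) (β δ ρ κ : ℝ) (f : Fin K → ℂ) : ℝ :=
  ∑ s, (κ^2 * p s * β * α s / ((δ+1)*(μ s + 1)))
    * (ρ^2*δ*(μ s)*‖f s‖^2 + ((1-ρ^2)*δ*(μ s) + δ + μ s + 1)*(N:ℝ))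

/-- The closed-form approximate rate `R̃_k`. -/
def Rtilde (K : ℕ) (k : Fin K) (M N : ℕ) (p α μ : Fin K → ℝ)
    (β δ ρ ι κ τ σ2 σRF2 : ℝ) (f : Fin K → ℂ) (b : Fin K → ℂ) : ℝ :=
  Real.logb 2 (1 + p k * τ^2 * xiK M N (α k) (μ k) β δ ρ ι κ (f k) /
    ((∑ i ∈ Finset.univ.erase k,
        p i * τ^2 * gammaKI M N (α k) (α i) (μ k) (μ i) β δ ρ ι κ (f k) (f i) (b i))
     + τ*(1-τ) * varpiK N (α k) (μ k) β δ (f k) * zetaV K N p α μ β δ ρ κ f * (M:ℝ)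
     + τ*(σRF2+σ2) * varpiK N (α k) (μ k) β δ (f k) * (M:ℝ)))

/-- The coefficient `Γ_k` of Corollary 3 / the power scaling law. -/
def GammaK (N : ℕ) (αk μk β δ ρ ι κ τ : ℝ) (fk : ℂ) : ℝ :=
  τ^2*ι^2*κ^2*β^2*αk^2 * ck1 N μk δ ρ fk / ((δ+1)^2*(μk+1)^2)

/-- The coefficient `Γ_{ki}` of Corollary 3 / the power scaling law. -/
def GammaKI (N : ℕ) (αk αi μk μi β δ ρ ι κ τ : ℝ) (fk fi bki : ℂ) : ℝ :=
  τ^2*ι^2*κ^2*β^2*αk*αi * zki1 N μk μi δ ρ fk fi bki / ((δ+1)^2*(μk+1)*(μi+1))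


lemma aux_inv_nat (Nt : ℕ → ℕ) (h : Tendsto Nt atTop atTop) :
    Tendsto (fun t => ((Nt t : ℝ))⁻¹) atTop (nhds 0) :=
  (tendsto_natCast_atTop_atTop.comp h).inv_tendsto_atTop

lemma aux_F (Nt : ℕ → ℕ) (h : Tendsto Nt atTop atTop) (g : ℕ → ℂ) (C : ℝ)
    (hC : ∀ t, ‖g t‖ ≤ C) :
    Tendsto (fun t => ‖g t‖^2 * ((Nt t : ℝ))⁻¹) atTop (nhds 0) := by
  refine squeeze_zero_norm (a := fun t => C^2 * ((Nt t : ℝ))⁻¹) (fun t => ?_) ?_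
  · have h0 : (0:ℝ) ≤ ‖g t‖ := norm_nonneg _
    have h1 : (0:ℝ) ≤ ((Nt t : ℝ))⁻¹ := by positivity
    rw [Real.norm_eq_abs, abs_of_nonneg (by positivity)]
    have : ‖g t‖^2 ≤ C^2 := by nlinarith [hC t]
    nlinarith
  · simpa using (aux_inv_nat Nt h).const_mul (C^2)

lemma aux_B2 (Nt : ℕ → ℕ) (gb : ℕ → ℂ)
    (hb : Tendsto (fun t => ‖gb t‖ * ((Nt t : ℝ))⁻¹) atTop (nhds 0)) :
    Tendsto (fun t => ‖gb t‖^2 * (((Nt t : ℝ))⁻¹ * ((Nt t : ℝ))⁻¹)) atTop (nhds 0) := by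
  have := hb.mul hb
  rw [show (0:ℝ)*0 = 0 by ring] at this
  exact this.congr (fun t => by ring)

lemma aux_R (Nt : ℕ → ℕ) (gk gi gb : ℕ → ℂ) (C : ℝ)
    (hk : ∀ t, ‖gk t‖ ≤ C) (hi : ∀ t, ‖gi t‖ ≤ C)
    (hb : Tendsto (fun t => ‖gb t‖ * ((Nt t : ℝ))⁻¹) atTop (nhds 0))
    (hin : Tendsto (fun t => ((Nt t : ℝ))⁻¹) atTop (nhds 0)) :
    Tendsto (fun t => ((starRingEnd ℂ) (gk t) * gi t * (starRingEnd ℂ) (gb t)).re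
      * (((Nt t : ℝ))⁻¹ * ((Nt t : ℝ))⁻¹)) atTop (nhds 0) := by
  refine squeeze_zero_norm
    (a := fun t => C * C * (‖gb t‖ * ((Nt t : ℝ))⁻¹) * ((Nt t : ℝ))⁻¹)
    (fun t => ?_) ?_
  · have h1 : (0:ℝ) ≤ ((Nt t : ℝ))⁻¹ := by positivity
    have h2 : |((starRingEnd ℂ) (gk t) * gi t * (starRingEnd ℂ) (gb t)).re|
        ≤ ‖gk t‖ * ‖gi t‖ * ‖gb t‖ := by
      calc |((starRingEnd ℂ) (gk t) * gi t * (starRingEnd ℂ) (gb t)).re|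
          ≤ ‖(starRingEnd ℂ) (gk t) * gi t * (starRingEnd ℂ) (gb t)‖ :=
            Complex.abs_re_le_norm _
        _ = ‖gk t‖ * ‖gi t‖ * ‖gb t‖ := by simp [norm_mul]
    have hC0 : (0:ℝ) ≤ C := le_trans (norm_nonneg _) (hk t)
    have h3 : ‖gk t‖ * ‖gi t‖ * ‖gb t‖
        ≤ C * C * ‖gb t‖ := by
      have n2 := norm_nonneg (gi t)
      have n3 := norm_nonneg (gb t)
      exact mul_le_mul_of_nonneg_right (mul_le_mul (hk t) (hi t) n2 hC0) n3
    show ‖((starRingEnd ℂ) (gk t) * gi t * (starRingEnd ℂ) (gb t)).re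
      * (((Nt t : ℝ))⁻¹ * ((Nt t : ℝ))⁻¹)‖
      ≤ C * C * (‖gb t‖ * ((Nt t : ℝ))⁻¹) * ((Nt t : ℝ))⁻¹
    calc ‖((starRingEnd ℂ) (gk t) * gi t * (starRingEnd ℂ) (gb t)).re
        * (((Nt t : ℝ))⁻¹ * ((Nt t : ℝ))⁻¹)‖
        = |((starRingEnd ℂ) (gk t) * gi t * (starRingEnd ℂ) (gb t)).re|
          * (((Nt t : ℝ))⁻¹ * ((Nt t : ℝ))⁻¹) := by
          rw [Real.norm_eq_abs, abs_mul, abs_of_nonneg (mul_nonneg h1 h1)]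
      _ ≤ (C * C * ‖gb t‖) * (((Nt t : ℝ))⁻¹ * ((Nt t : ℝ))⁻¹) :=
          mul_le_mul_of_nonneg_right (h2.trans h3) (mul_nonneg h1 h1)
      _ = C * C * (‖gb t‖ * ((Nt t : ℝ))⁻¹) * ((Nt t : ℝ))⁻¹ := by ring
  · have := (hb.const_mul (C*C)).mul hin
    simpa using this

lemma tendsto_zki1 (Nt : ℕ → ℕ) (hNt : Tendsto Nt atTop atTop) (μk μi δ ρ C : ℝ)
    (gk gi gb : ℕ → ℂ)
    (hk : ∀ t, ‖gk t‖ ≤ C) (hi : ∀ t, ‖gi t‖ ≤ C)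
    (hb : Tendsto (fun t => ‖gb t‖ * ((Nt t : ℝ))⁻¹) atTop (nhds 0)) :
    Tendsto (fun t => zki1 (Nt t) μk μi δ ρ (gk t) (gi t) (gb t) * (((Nt t : ℝ))^2)⁻¹)
      atTop (nhds ((μi+1-ρ^2*μi)*δ^2)) := by
  have hin := aux_inv_nat Nt hNt
  have hFk := aux_F Nt hNt gk C hk
  have hFi := aux_F Nt hNt gi C hi
  have hB2 := aux_B2 Nt gb hb
  have hR := aux_R Nt gk gi gb C hk hi hb hin
  have hmain : Tendsto (fun t =>
      (μi+1-ρ^2*μi)*δ^2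
      + (((μi+1-ρ^2*μi)*δ^2*μk) * (‖gk t‖^2 * ((Nt t:ℝ))⁻¹)
        + (ρ^2*δ^2*μi) * (‖gi t‖^2 * ((Nt t:ℝ))⁻¹)
        + ((μk+2*δ+1)*(μi+1-ρ^2*μi) + ρ^2*μi) * ((Nt t:ℝ))⁻¹)
      + ((2*δ*ρ^2*μi) * ((‖gi t‖^2 * ((Nt t:ℝ))⁻¹) * ((Nt t:ℝ))⁻¹)
        + (μk*ρ^2*μi) * (‖gb t‖^2 * (((Nt t:ℝ))⁻¹ * ((Nt t:ℝ))⁻¹))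
        + (2*δ*μk*ρ^2*μi) * (((starRingEnd ℂ) (gk t) * gi t * (starRingEnd ℂ) (gb t)).re
            * (((Nt t:ℝ))⁻¹ * ((Nt t:ℝ))⁻¹))
        + (ρ^2*δ*μi*δ*μk) * ((‖gi t‖^2 * ((Nt t:ℝ))⁻¹) * (‖gk t‖^2 * ((Nt t:ℝ))⁻¹))
        + ((2*μi*(1-ρ^2)+2)*δ*μk) * ((‖gk t‖^2 * ((Nt t:ℝ))⁻¹) * ((Nt t:ℝ))⁻¹)))
      atTop (nhds ((μi+1-ρ^2*μi)*δ^2)) := by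
    have h1 := ((hFk.const_mul ((μi+1-ρ^2*μi)*δ^2*μk)).add
        (hFi.const_mul (ρ^2*δ^2*μi))).add
        (hin.const_mul ((μk+2*δ+1)*(μi+1-ρ^2*μi) + ρ^2*μi))
    have h2 := (((((hFi.mul hin).const_mul (2*δ*ρ^2*μi)).add
        (hB2.const_mul (μk*ρ^2*μi))).add
        (hR.const_mul (2*δ*μk*ρ^2*μi))).add
        ((hFi.mul hFk).const_mul (ρ^2*δ*μi*δ*μk))).add
        ((hFk.mul hin).const_mul ((2*μi*(1-ρ^2)+2)*δ*μk))
    have h := (tendsto_const_nhds (x := (μi+1-ρ^2*μi)*δ^2) (f := atTop (α := ℕ))).add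
      (h1.add h2)
    convert h using 2 <;> ring
  apply hmain.congr'
  filter_upwards [hNt.eventually_ge_atTop 1] with t ht
  have hN0 : ((Nt t : ℝ)) ≠ 0 := Nat.cast_ne_zero.mpr (by omega)
  simp only [zki1]
  field_simp
  ring

lemma tendsto_ck1' (Nt : ℕ → ℕ) (hNt : Tendsto Nt atTop atTop) (μk δ ρ C : ℝ)
    (g : ℕ → ℂ) (hC : ∀ t, ‖g t‖ ≤ C) :
    Tendsto (fun t => ck1 (Nt t) μk δ ρ (g t) * (((Nt t : ℝ))^2)⁻¹) atTop
      (nhds (ρ^2*(μk+δ+1)^2 + (1-ρ^2)*δ^2*μk + δ^2)) := by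
  have hin := aux_inv_nat Nt hNt
  have hF := aux_F Nt hNt g C hC
  have hmain : Tendsto (fun t =>
      (ρ^2*(μk+δ+1)^2 + (1-ρ^2)*δ^2*μk + δ^2)
      + ((((2*μk+3*δ+2-δ*μk)*ρ^2 + (1+μk)*δ) * δ*μk) * (‖g t‖^2 * ((Nt t:ℝ))⁻¹)
         + ((μk+δ+2)^2 - ρ^2*(μk+δ+1)^2 - 2*ρ^2*δ*μk - 2) * ((Nt t:ℝ))⁻¹)
      + (ρ^2*δ^2*μk^2 * ((‖g t‖^2 * ((Nt t:ℝ))⁻¹) * (‖g t‖^2 * ((Nt t:ℝ))⁻¹))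
         + (2*((1-ρ^2)*(μk+δ)+2)*δ*μk) * ((‖g t‖^2 * ((Nt t:ℝ))⁻¹) * ((Nt t:ℝ))⁻¹)))
      atTop (nhds (ρ^2*(μk+δ+1)^2 + (1-ρ^2)*δ^2*μk + δ^2)) := by
    have h1 := (hF.const_mul ((((2*μk+3*δ+2-δ*μk)*ρ^2 + (1+μk)*δ) * δ*μk))).add
      (hin.const_mul ((μk+δ+2)^2 - ρ^2*(μk+δ+1)^2 - 2*ρ^2*δ*μk - 2))
    have h2 := ((hF.mul hF).const_mul (ρ^2*δ^2*μk^2)).add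
      ((hF.mul hin).const_mul (2*((1-ρ^2)*(μk+δ)+2)*δ*μk))
    have h := (tendsto_const_nhds (x := ρ^2*(μk+δ+1)^2 + (1-ρ^2)*δ^2*μk + δ^2)
      (f := atTop (α := ℕ))).add (h1.add h2)
    convert h using 2 <;> ring
  apply hmain.congr'
  filter_upwards [hNt.eventually_ge_atTop 1] with t ht
  have hN0 : ((Nt t : ℝ)) ≠ 0 := Nat.cast_ne_zero.mpr (by omega)
  simp only [ck1]
  field_simp
  ring

lemma tendsto_num (Mt Nt : ℕ → ℕ) (hMt : Tendsto Mt atTop atTop)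
    (hNt : Tendsto Nt atTop atTop) (Eu αk μk β δ ρ ι κ τ C : ℝ)
    (g : ℕ → ℂ) (hC : ∀ t, ‖g t‖ ≤ C)
    (hδ1 : δ + 1 ≠ 0) (hμk1 : μk + 1 ≠ 0) :
    Tendsto (fun t => Eu/((Mt t : ℝ)*(Nt t : ℝ)) * τ^2
        * xiK (Mt t) (Nt t) αk μk β δ ρ ι κ (g t) * (((Mt t : ℝ))*((Nt t : ℝ)))⁻¹) atTop
      (nhds (Eu*τ^2*β^2*αk^2*κ^2/((δ+1)^2*(μk+1)^2)
        * ((ρ^2*(μk+δ+1)^2 + (1-ρ^2)*δ^2*μk + δ^2) * ι^2))) := by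
  have hin := aux_inv_nat Nt hNt
  have him := aux_inv_nat Mt hMt
  have hF := aux_F Nt hNt g C hC
  have hL1 := tendsto_ck1' Nt hNt μk δ ρ C g hC
  -- ck3 * (m*n) → 0
  have hCK3 : Tendsto (fun t => ck3 μk δ ρ ι (g t) * (((Mt t:ℝ))⁻¹ * ((Nt t:ℝ))⁻¹))
      atTop (nhds 0) := by
    have h0 : Tendsto (fun t =>
        ((((3-2*ι^2)*(μk+1) + (ι^2-1)*δ*(μk-3))*ρ^2 + (δ+1-ι^2*δ)*(μk+1))*δ*μk)
          * (‖g t‖^2 * ((Nt t:ℝ))⁻¹ * ((Mt t:ℝ))⁻¹)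
        + (((ι^2-1)*(μk+δ+1)^2 + 2*(ι^2-2)*μk*δ)*ρ^2 + (1-ι^2)*(μk+δ+2)^2
          + 2*μk*δ + 2*μk + 2*δ - 1 - 2*ι^2) * (((Mt t:ℝ))⁻¹ * ((Nt t:ℝ))⁻¹))
        atTop (nhds 0) := by
      have h := ((hF.mul him).const_mul
          ((((3-2*ι^2)*(μk+1) + (ι^2-1)*δ*(μk-3))*ρ^2 + (δ+1-ι^2*δ)*(μk+1))*δ*μk)).add
        ((him.mul hin).const_mul
          (((ι^2-1)*(μk+δ+1)^2 + 2*(ι^2-2)*μk*δ)*ρ^2 + (1-ι^2)*(μk+δ+2)^2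
            + 2*μk*δ + 2*μk + 2*δ - 1 - 2*ι^2))
      simpa using h
    exact h0.congr (fun t => by simp only [ck3]; ring)
  -- ck4 * (m*(n*n)) → 0
  have hCK4 : Tendsto (fun t => ck4 μk δ ρ ι (g t)
      * (((Mt t:ℝ))⁻¹ * (((Nt t:ℝ))⁻¹ * ((Nt t:ℝ))⁻¹))) atTop (nhds 0) := by
    have h0 : Tendsto (fun t =>
        ((1-ι^2)*ρ^2*δ^2*μk^2)
          * (‖g t‖^2 * ((Nt t:ℝ))⁻¹ * (‖g t‖^2 * ((Nt t:ℝ))⁻¹)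
             * ((Mt t:ℝ))⁻¹)
        + (2*δ*μk*((1-ι^2)*(1-ρ^2)*(μk+δ+1) + (2-ι^2)*(1+ρ^2)))
          * (‖g t‖^2 * ((Nt t:ℝ))⁻¹ * (((Mt t:ℝ))⁻¹ * ((Nt t:ℝ))⁻¹)))
        atTop (nhds 0) := by
      have h := (((hF.mul hF).mul him).const_mul ((1-ι^2)*ρ^2*δ^2*μk^2)).add
        ((hF.mul (him.mul hin)).const_mul
          (2*δ*μk*((1-ι^2)*(1-ρ^2)*(μk+δ+1) + (2-ι^2)*(1+ρ^2))))
      simpa using h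
    exact h0.congr (fun t => by simp only [ck4]; ring)
  have hmain : Tendsto (fun t =>
      (Eu*τ^2*β^2*αk^2*κ^2/((δ+1)^2*(μk+1)^2))
      * ((ck1 (Nt t) μk δ ρ (g t) * (((Nt t:ℝ))^2)⁻¹) * ι^2
        + ck2 μk δ ρ ι * ((Mt t:ℝ))⁻¹
        + ck3 μk δ ρ ι (g t) * (((Mt t:ℝ))⁻¹ * ((Nt t:ℝ))⁻¹)
        + ck4 μk δ ρ ι (g t) * (((Mt t:ℝ))⁻¹ * (((Nt t:ℝ))⁻¹ * ((Nt t:ℝ))⁻¹))))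
      atTop (nhds (Eu*τ^2*β^2*αk^2*κ^2/((δ+1)^2*(μk+1)^2)
        * ((ρ^2*(μk+δ+1)^2 + (1-ρ^2)*δ^2*μk + δ^2) * ι^2))) := by
    have h := ((((hL1.mul_const (ι^2)).add (him.const_mul (ck2 μk δ ρ ι))).add hCK3).add
      hCK4).const_mul (Eu*τ^2*β^2*αk^2*κ^2/((δ+1)^2*(μk+1)^2))
    convert h using 2 <;> ring
  apply hmain.congr'
  filter_upwards [hMt.eventually_ge_atTop 1, hNt.eventually_ge_atTop 1] with t htM htN
  have hM0 : ((Mt t : ℝ)) ≠ 0 := Nat.cast_ne_zero.mpr (by omega)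
  have hN0 : ((Nt t : ℝ)) ≠ 0 := Nat.cast_ne_zero.mpr (by omega)
  simp only [xiK]
  field_simp

lemma tendsto_int (Mt Nt : ℕ → ℕ) (hMt : Tendsto Mt atTop atTop)
    (hNt : Tendsto Nt atTop atTop) (Eu αk αi μk μi β δ ρ ι κ τ C : ℝ)
    (gk gi gb : ℕ → ℂ)
    (hk : ∀ t, ‖gk t‖ ≤ C) (hi : ∀ t, ‖gi t‖ ≤ C)
    (hb : Tendsto (fun t => ‖gb t‖ * ((Nt t : ℝ))⁻¹) atTop (nhds 0))
    (hδ1 : δ + 1 ≠ 0) (hμk1 : μk + 1 ≠ 0) (hμi1 : μi + 1 ≠ 0) :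
    Tendsto (fun t => Eu/((Mt t : ℝ)*(Nt t : ℝ)) * τ^2
        * gammaKI (Mt t) (Nt t) αk αi μk μi β δ ρ ι κ (gk t) (gi t) (gb t)
        * (((Mt t : ℝ))*((Nt t : ℝ)))⁻¹) atTop
      (nhds (Eu*τ^2*κ^2*β^2*αk*αi/((δ+1)^2*(μk+1)*(μi+1)) * ((μi+1-ρ^2*μi)*δ^2*ι^2))) := by
  have hin := aux_inv_nat Nt hNt
  have him := aux_inv_nat Mt hMt
  have hFk := aux_F Nt hNt gk C hk
  have hFi := aux_F Nt hNt gi C hi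
  have hB2 := aux_B2 Nt gb hb
  have hR := aux_R Nt gk gi gb C hk hi hb hin
  have hL2 := tendsto_zki1 Nt hNt μk μi δ ρ C gk gi gb hk hi hb
  have hZ3 : Tendsto (fun t => zki3 μk μi δ ρ ι (gk t) (gi t)
      * (((Mt t:ℝ))⁻¹ * ((Nt t:ℝ))⁻¹)) atTop (nhds 0) := by
    have h0 : Tendsto (fun t =>
        (((1-ι^2)*δ*(μi+1-ρ^2*μi) + μi+1)*δ*μk)
          * (‖gk t‖^2 * ((Nt t:ℝ))⁻¹ * ((Mt t:ℝ))⁻¹)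
        + (((μi+1)*(μk+2*δ+1) - (μk+2*δ)*ρ^2*μi)*(1-ι^2)) * (((Mt t:ℝ))⁻¹ * ((Nt t:ℝ))⁻¹)
        + ((μk+δ+1-ι^2*δ)*ρ^2*δ*μi)
          * (‖gi t‖^2 * ((Nt t:ℝ))⁻¹ * ((Mt t:ℝ))⁻¹)) atTop (nhds 0) := by
      have h := (((hFk.mul him).const_mul (((1-ι^2)*δ*(μi+1-ρ^2*μi) + μi+1)*δ*μk)).add
        ((him.mul hin).const_mul (((μi+1)*(μk+2*δ+1) - (μk+2*δ)*ρ^2*μi)*(1-ι^2)))).add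
        ((hFi.mul him).const_mul ((μk+δ+1-ι^2*δ)*ρ^2*δ*μi))
      simpa using h
    exact h0.congr (fun t => by simp only [zki3]; ring)
  have hZ4 : Tendsto (fun t => zki4 μk μi δ ρ ι (gk t) (gi t) (gb t)
      * (((Mt t:ℝ))⁻¹ * (((Nt t:ℝ))⁻¹ * ((Nt t:ℝ))⁻¹))) atTop (nhds 0) := by
    have h0 : Tendsto (fun t =>
        (δ*ρ^2*μi*(1-ι^2)*δ*μk)
          * (‖gi t‖^2 * ((Nt t:ℝ))⁻¹ * (‖gk t‖^2 * ((Nt t:ℝ))⁻¹)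
             * ((Mt t:ℝ))⁻¹)
        + (((-2)*ρ^2*μi + 2*μi + 2)*(1-ι^2)*δ*μk)
          * (‖gk t‖^2 * ((Nt t:ℝ))⁻¹ * (((Mt t:ℝ))⁻¹ * ((Nt t:ℝ))⁻¹))
        + ((1-ι^2)*ρ^2*μk*μi)
          * (‖gb t‖^2 * (((Nt t:ℝ))⁻¹ * ((Nt t:ℝ))⁻¹) * ((Mt t:ℝ))⁻¹)
        + (2*δ*(1-ι^2)*ρ^2*μk*μi)
          * (((starRingEnd ℂ) (gk t) * gi t * (starRingEnd ℂ) (gb t)).re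
              * (((Nt t:ℝ))⁻¹ * ((Nt t:ℝ))⁻¹) * ((Mt t:ℝ))⁻¹)
        + (2*(1-ι^2)*ρ^2*δ*μi)
          * (‖gi t‖^2 * ((Nt t:ℝ))⁻¹ * (((Mt t:ℝ))⁻¹ * ((Nt t:ℝ))⁻¹)))
        atTop (nhds 0) := by
      have h := (((((( hFi.mul hFk).mul him).const_mul (δ*ρ^2*μi*(1-ι^2)*δ*μk)).add
        ((hFk.mul (him.mul hin)).const_mul (((-2)*ρ^2*μi + 2*μi + 2)*(1-ι^2)*δ*μk))).add
        ((hB2.mul him).const_mul ((1-ι^2)*ρ^2*μk*μi))).add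
        ((hR.mul him).const_mul (2*δ*(1-ι^2)*ρ^2*μk*μi))).add
        ((hFi.mul (him.mul hin)).const_mul (2*(1-ι^2)*ρ^2*δ*μi))
      simpa using h
    exact h0.congr (fun t => by simp only [zki4]; ring)
  have hmain : Tendsto (fun t =>
      (Eu*τ^2*κ^2*β^2*αk*αi/((δ+1)^2*(μk+1)*(μi+1)))
      * ((zki1 (Nt t) μk μi δ ρ (gk t) (gi t) (gb t) * (((Nt t:ℝ))^2)⁻¹) * ι^2
        + zki2 μk μi δ ρ ι * ((Mt t:ℝ))⁻¹
        + zki3 μk μi δ ρ ι (gk t) (gi t) * (((Mt t:ℝ))⁻¹ * ((Nt t:ℝ))⁻¹)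
        + zki4 μk μi δ ρ ι (gk t) (gi t) (gb t)
            * (((Mt t:ℝ))⁻¹ * (((Nt t:ℝ))⁻¹ * ((Nt t:ℝ))⁻¹)))) atTop
      (nhds (Eu*τ^2*κ^2*β^2*αk*αi/((δ+1)^2*(μk+1)*(μi+1)) * ((μi+1-ρ^2*μi)*δ^2*ι^2))) := by
    have h := ((((hL2.mul_const (ι^2)).add (him.const_mul (zki2 μk μi δ ρ ι))).add hZ3).add
      hZ4).const_mul (Eu*τ^2*κ^2*β^2*αk*αi/((δ+1)^2*(μk+1)*(μi+1)))
    convert h using 2 <;> ring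
  apply hmain.congr'
  filter_upwards [hMt.eventually_ge_atTop 1, hNt.eventually_ge_atTop 1] with t htM htN
  have hM0 : ((Mt t : ℝ)) ≠ 0 := Nat.cast_ne_zero.mpr (by omega)
  have hN0 : ((Nt t : ℝ)) ≠ 0 := Nat.cast_ne_zero.mpr (by omega)
  simp only [gammaKI]
  field_simp

lemma tendsto_varpi (Nt : ℕ → ℕ) (hNt : Tendsto Nt atTop atTop) (αk μk β δ C : ℝ)
    (g : ℕ → ℂ) (hC : ∀ t, ‖g t‖ ≤ C)
    (hδ1 : δ + 1 ≠ 0) (hμk1 : μk + 1 ≠ 0) :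
    Tendsto (fun t => varpiK (Nt t) αk μk β δ (g t) * ((Nt t : ℝ))⁻¹) atTop
      (nhds (β*αk/((δ+1)*(μk+1)) * (μk+δ+1))) := by
  have hF := aux_F Nt hNt g C hC
  have hmain : Tendsto (fun t =>
      (β*αk/((δ+1)*(μk+1))) * (δ*μk*(‖g t‖^2 * ((Nt t:ℝ))⁻¹) + (μk+δ+1)))
      atTop (nhds (β*αk/((δ+1)*(μk+1)) * (μk+δ+1))) := by
    have h := ((hF.const_mul (δ*μk)).add
      (tendsto_const_nhds (x := μk+δ+1) (f := atTop (α := ℕ)))).const_mul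
      (β*αk/((δ+1)*(μk+1)))
    convert h using 2 <;> ring
  apply hmain.congr'
  filter_upwards [hNt.eventually_ge_atTop 1] with t ht
  have hN0 : ((Nt t : ℝ)) ≠ 0 := Nat.cast_ne_zero.mpr (by omega)
  simp only [varpiK]
  field_simp

lemma tendsto_zeta (K : ℕ) (Mt Nt : ℕ → ℕ) (hMt : Tendsto Mt atTop atTop)
    (hNt : Tendsto Nt atTop atTop) (Eu β δ ρ κ C : ℝ) (α μ : Fin K → ℝ)
    (f : ℕ → Fin K → ℂ) (hfC : ∀ t i, ‖f t i‖ ≤ C)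
    (hδ1 : δ + 1 ≠ 0) (hμ1 : ∀ s, μ s + 1 ≠ 0) :
    Tendsto (fun t => zetaV K (Nt t) (fun _ => Eu/((Mt t : ℝ)*(Nt t : ℝ))) α μ β δ ρ κ (f t))
      atTop (nhds 0) := by
  have him := aux_inv_nat Mt hMt
  have hterm : ∀ s : Fin K, Tendsto (fun t =>
      (κ^2*Eu*β*(α s)/((δ+1)*(μ s+1)))
        * (ρ^2*δ*(μ s)*(‖f t s‖^2 * ((Nt t:ℝ))⁻¹ * ((Mt t:ℝ))⁻¹)
          + ((1-ρ^2)*δ*(μ s)+δ+(μ s)+1)*((Mt t:ℝ))⁻¹)) atTop (nhds 0) := by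
    intro s
    have h := ((((aux_F Nt hNt (fun t => f t s) C (fun t => hfC t s)).mul him).const_mul
      (ρ^2*δ*(μ s))).add (him.const_mul ((1-ρ^2)*δ*(μ s)+δ+(μ s)+1))).const_mul
      (κ^2*Eu*β*(α s)/((δ+1)*(μ s+1)))
    simpa using h
  have hsum := tendsto_finset_sum Finset.univ (fun s (_ : s ∈ Finset.univ) => hterm s)
  rw [Finset.sum_const_zero] at hsum
  apply hsum.congr'
  filter_upwards [hMt.eventually_ge_atTop 1, hNt.eventually_ge_atTop 1] with t htM htN
  have hM0 : ((Mt t : ℝ)) ≠ 0 := Nat.cast_ne_zero.mpr (by omega)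
  have hN0 : ((Nt t : ℝ)) ≠ 0 := Nat.cast_ne_zero.mpr (by omega)
  simp only [zetaV]
  refine Finset.sum_congr rfl (fun s _ => ?_)
  have hμs := hμ1 s
  field_simp

lemma aux_div_inv (a b c : ℝ) (hc : c ≠ 0) : a * c⁻¹ / (b * c⁻¹) = a / b := by
  rcases eq_or_ne b 0 with rb | rb
  · simp [rb]
  · field_simp

set_option maxHeartbeats 1000000 in
/-- Corollary 4: power scaling `p_i = E_u/(MN)` with no user aligned;
as `M, N → ∞` the closed-form rate converges to the limit of eq. (30). -/
theorem corollary4_power_scaling_one_over_MN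
    (K : ℕ) (hK : 2 ≤ K) (k : Fin K)
    (α μ : Fin K → ℝ) (β δ ρ ι κ τ σ2 σRF2 : ℝ)
    (hα : ∀ i, 0 < α i) (hμ : ∀ i, 0 < μ i)
    (hβ : 0 < β) (hδ : 0 < δ)
    (hρ : ρ ∈ Set.Ioo (0:ℝ) 1) (hι : ι ∈ Set.Ioc (0:ℝ) 1) (hκ : κ ∈ Set.Ioc (0:ℝ) 1)
    (hτ : τ ∈ Set.Ioo (0:ℝ) 1) (hσ : 0 < σ2) (hσRF : 0 < σRF2)
    (Mt Nt : ℕ → ℕ) (hMt : Tendsto Mt atTop atTop) (hNt : Tendsto Nt atTop atTop)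
    (Eu : ℝ) (hEu : 0 < Eu)
    (f b : ℕ → Fin K → ℂ)
    (hf_adm : ∀ t i, ‖f t i‖ ≤ Nt t)
    (hb_adm : ∀ t, ∀ i, i ≠ k → ‖b t i‖ ≤ Nt t)
    (C : ℝ) (hC : 0 < C) (hfC : ∀ t i, ‖f t i‖ ≤ C)
    (hb0 : ∀ i, i ≠ k →
      Tendsto (fun t => ‖b t i‖ / (Nt t : ℝ)) atTop (nhds 0)) :
    Tendsto (fun t : ℕ =>
        Rtilde K k (Mt t) (Nt t) (fun _ => Eu/((Mt t : ℝ)*(Nt t : ℝ)))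
          α μ β δ ρ ι κ τ σ2 σRF2 (f t) (b t)) atTop
      (nhds (Real.logb 2 (1 +
        ((ρ^2/δ^2)*(μ k+δ+1)^2 + μ k + 1 - ρ^2*μ k) /
        ((∑ i ∈ Finset.univ.erase k,
            (α i * (μ k+1)/(α k * (μ i+1))) * (μ i + 1 - ρ^2 * μ i))
         + (σRF2+σ2)*(μ k+δ+1)*(δ+1)*(μ k+1)/(Eu*ι^2*κ^2*τ*β*α k*δ^2))))) := by
  obtain ⟨hρ0, hρ1⟩ := hρ
  obtain ⟨hι0, hι1⟩ := hι
  obtain ⟨hκ0, hκ1⟩ := hκ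
  obtain ⟨hτ0, hτ1⟩ := hτ
  have hδ1 : δ + 1 ≠ 0 := by positivity
  have hδ1' : (0:ℝ) < δ + 1 := by linarith
  have hμ1 : ∀ s, μ s + 1 ≠ 0 := fun s => by have := hμ s; positivity
  have hμ1' : ∀ s, (0:ℝ) < μ s + 1 := fun s => by have := hμ s; linarith
  have hαk := hα k
  have hμk := hμ k
  have hρsq : ρ^2 < 1 := by nlinarith
  have hEu0 : Eu ≠ 0 := hEu.ne'
  have hτ0' : τ ≠ 0 := hτ0.ne'
  have hκ0' : κ ≠ 0 := hκ0.ne'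
  have hι0' : ι ≠ 0 := hι0.ne'
  have hβ0 : β ≠ 0 := hβ.ne'
  have hδ0 : δ ≠ 0 := hδ.ne'
  have hαk0 : α k ≠ 0 := hαk.ne'
  -- basic limits
  have hϖ := tendsto_varpi Nt hNt (α k) (μ k) β δ C (fun t => f t k)
    (fun t => hfC t k) hδ1 (hμ1 k)
  have hζ := tendsto_zeta K Mt Nt hMt hNt Eu β δ ρ κ C α μ f hfC hδ1 hμ1
  have hNum := tendsto_num Mt Nt hMt hNt Eu (α k) (μ k) β δ ρ ι κ τ C (fun t => f t k)
    (fun t => hfC t k) hδ1 (hμ1 k)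
  -- notation for limits
  set σS : ℝ := Eu*τ^2*β^2*(α k)^2*κ^2/((δ+1)^2*(μ k+1)^2)
    * ((ρ^2*(μ k+δ+1)^2 + (1-ρ^2)*δ^2*(μ k) + δ^2) * ι^2) with hσS_def
  set cI : Fin K → ℝ := fun i => Eu*τ^2*κ^2*β^2*(α k)*(α i)/((δ+1)^2*(μ k+1)*(μ i+1))
    * ((μ i+1-ρ^2*(μ i))*δ^2*ι^2) with hcI_def
  set cN : ℝ := τ*(σRF2+σ2) * (β*(α k)/((δ+1)*(μ k+1)) * (μ k+δ+1)) with hcN_def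
  set σD : ℝ := (∑ i ∈ Finset.univ.erase k, cI i) + cN with hσD_def
  -- interference terms
  have hInt : ∀ i ∈ Finset.univ.erase k, Tendsto (fun t =>
      Eu/((Mt t : ℝ)*(Nt t : ℝ)) * τ^2
        * gammaKI (Mt t) (Nt t) (α k) (α i) (μ k) (μ i) β δ ρ ι κ (f t k) (f t i) (b t i)
        * (((Mt t : ℝ))*((Nt t : ℝ)))⁻¹) atTop (nhds (cI i)) := by
    intro i hi
    have hik : i ≠ k := Finset.ne_of_mem_erase hi
    have hbn : Tendsto (fun t => ‖b t i‖ * ((Nt t : ℝ))⁻¹) atTop (nhds 0) := by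
      simpa [div_eq_mul_inv] using hb0 i hik
    exact tendsto_int Mt Nt hMt hNt Eu (α k) (α i) (μ k) (μ i) β δ ρ ι κ τ C
      (fun t => f t k) (fun t => f t i) (fun t => b t i)
      (fun t => hfC t k) (fun t => hfC t i) hbn hδ1 (hμ1 k) (hμ1 i)
  have hSum := tendsto_finset_sum (Finset.univ.erase k) hInt
  -- denominator limit
  have hD0 : Tendsto (fun t =>
      (∑ i ∈ Finset.univ.erase k,
        Eu/((Mt t : ℝ)*(Nt t : ℝ)) * τ^2
          * gammaKI (Mt t) (Nt t) (α k) (α i) (μ k) (μ i) β δ ρ ι κ (f t k) (f t i) (b t i)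
          * (((Mt t : ℝ))*((Nt t : ℝ)))⁻¹)
      + (τ*(1-τ)) * ((varpiK (Nt t) (α k) (μ k) β δ (f t k) * ((Nt t : ℝ))⁻¹)
          * zetaV K (Nt t) (fun _ => Eu/((Mt t : ℝ)*(Nt t : ℝ))) α μ β δ ρ κ (f t))
      + (τ*(σRF2+σ2)) * (varpiK (Nt t) (α k) (μ k) β δ (f t k) * ((Nt t : ℝ))⁻¹))
      atTop (nhds σD) := by
    have h := (hSum.add ((hϖ.mul hζ).const_mul (τ*(1-τ)))).add (hϖ.const_mul (τ*(σRF2+σ2)))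
    rw [hσD_def, hcN_def]
    convert h using 2
    ring
  have hDen : Tendsto (fun t =>
      ((∑ i ∈ Finset.univ.erase k,
          (Eu/((Mt t : ℝ)*(Nt t : ℝ))) * τ^2
            * gammaKI (Mt t) (Nt t) (α k) (α i) (μ k) (μ i) β δ ρ ι κ (f t k) (f t i) (b t i))
        + τ*(1-τ) * varpiK (Nt t) (α k) (μ k) β δ (f t k)
            * zetaV K (Nt t) (fun _ => Eu/((Mt t : ℝ)*(Nt t : ℝ))) α μ β δ ρ κ (f t) * (Mt t : ℝ)
        + τ*(σRF2+σ2) * varpiK (Nt t) (α k) (μ k) β δ (f t k) * (Mt t : ℝ))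
      * (((Mt t : ℝ))*((Nt t : ℝ)))⁻¹) atTop (nhds σD) := by
    apply hD0.congr'
    filter_upwards [hMt.eventually_ge_atTop 1, hNt.eventually_ge_atTop 1] with t htM htN
    have hM0 : ((Mt t : ℝ)) ≠ 0 := Nat.cast_ne_zero.mpr (by omega)
    have hN0 : ((Nt t : ℝ)) ≠ 0 := Nat.cast_ne_zero.mpr (by omega)
    symm
    rw [add_mul, add_mul, Finset.sum_mul]
    congr 1
    · congr 1
      · field_simp
    · field_simp
  -- positivity of limits
  have hσS0 : 0 ≤ σS := by
    have h1 : 0 < ρ^2*(μ k+δ+1)^2 + (1-ρ^2)*δ^2*(μ k) + δ^2 := by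
      have h2 : 0 ≤ ρ^2*(μ k+δ+1)^2 := by positivity
      have h3 : 0 ≤ (1-ρ^2)*δ^2*(μ k) := by
        apply mul_nonneg (mul_nonneg (by linarith) (sq_nonneg δ)) hμk.le
      have : (0:ℝ) < δ^2 := by positivity
      linarith
    rw [hσS_def]
    positivity
  have hσDpos : 0 < σD := by
    rw [hσD_def]
    have h1 : 0 ≤ ∑ i ∈ Finset.univ.erase k, cI i := by
      refine Finset.sum_nonneg (fun i _ => ?_)
      rw [hcI_def]
      have h2 : 0 < μ i + 1 - ρ^2 * μ i := by nlinarith [hμ i]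
      have hαi := hα i
      have hμi := hμ i
      have h3 : 0 ≤ Eu*τ^2*κ^2*β^2*(α k)*(α i)/((δ+1)^2*(μ k+1)*(μ i+1)) := by positivity
      exact mul_nonneg h3 (mul_nonneg (mul_nonneg h2.le (sq_nonneg δ)) (sq_nonneg ι))
    have h2 : 0 < cN := by
      rw [hcN_def]
      have : (0:ℝ) < μ k + δ + 1 := by linarith
      positivity
    linarith
  -- SINR limit
  have hx := hNum.div hDen hσDpos.ne'
  have hx' : Tendsto (fun t =>
      (Eu/((Mt t : ℝ)*(Nt t : ℝ)) * τ^2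
        * xiK (Mt t) (Nt t) (α k) (μ k) β δ ρ ι κ (f t k)) /
      ((∑ i ∈ Finset.univ.erase k,
          (Eu/((Mt t : ℝ)*(Nt t : ℝ))) * τ^2
            * gammaKI (Mt t) (Nt t) (α k) (α i) (μ k) (μ i) β δ ρ ι κ (f t k) (f t i) (b t i))
        + τ*(1-τ) * varpiK (Nt t) (α k) (μ k) β δ (f t k)
            * zetaV K (Nt t) (fun _ => Eu/((Mt t : ℝ)*(Nt t : ℝ))) α μ β δ ρ κ (f t) * (Mt t : ℝ)
        + τ*(σRF2+σ2) * varpiK (Nt t) (α k) (μ k) β δ (f t k) * (Mt t : ℝ)))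
      atTop (nhds (σS/σD)) := by
    apply hx.congr'
    filter_upwards [hMt.eventually_ge_atTop 1, hNt.eventually_ge_atTop 1] with t htM htN
    have hM0 : ((Mt t : ℝ)) ≠ 0 := Nat.cast_ne_zero.mpr (by omega)
    have hN0 : ((Nt t : ℝ)) ≠ 0 := Nat.cast_ne_zero.mpr (by omega)
    exact aux_div_inv _ _ _ (mul_ne_zero hM0 hN0)
  have hpos1 : (0:ℝ) < 1 + σS/σD := by
    have := div_nonneg hσS0 hσDpos.le
    linarith
  have hcont : ContinuousAt (Real.logb 2) (1 + σS/σD) := Real.continuousAt_logb hpos1.ne'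
  have hfin := hcont.tendsto.comp ((tendsto_const_nhds (x := (1:ℝ))).add hx')
  -- value identification
  have hBIG : ((ρ^2/δ^2)*(μ k+δ+1)^2 + μ k + 1 - ρ^2*μ k) /
      ((∑ i ∈ Finset.univ.erase k,
          (α i * (μ k+1)/(α k * (μ i+1))) * (μ i + 1 - ρ^2 * μ i))
       + (σRF2+σ2)*(μ k+δ+1)*(δ+1)*(μ k+1)/(Eu*ι^2*κ^2*τ*β*α k*δ^2)) = σS/σD := by
    have hc0 : (Eu*τ^2*ι^2*κ^2*β^2*(α k)^2*δ^2/((δ+1)^2*(μ k+1)^2)) ≠ 0 := by positivity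
    have hS : σS = (Eu*τ^2*ι^2*κ^2*β^2*(α k)^2*δ^2/((δ+1)^2*(μ k+1)^2))
        * ((ρ^2/δ^2)*(μ k+δ+1)^2 + μ k + 1 - ρ^2*μ k) := by
      rw [hσS_def]
      field_simp
      ring
    have hD : σD = (Eu*τ^2*ι^2*κ^2*β^2*(α k)^2*δ^2/((δ+1)^2*(μ k+1)^2))
        * ((∑ i ∈ Finset.univ.erase k,
            (α i * (μ k+1)/(α k * (μ i+1))) * (μ i + 1 - ρ^2 * μ i))
         + (σRF2+σ2)*(μ k+δ+1)*(δ+1)*(μ k+1)/(Eu*ι^2*κ^2*τ*β*α k*δ^2)) := by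
      rw [hσD_def, mul_add]
      congr 1
      · rw [Finset.mul_sum]
        refine Finset.sum_congr rfl (fun i _ => ?_)
        rw [hcI_def]
        have h1 := hμ1 i
        have h2 := (hα i).ne'
        field_simp
      · rw [hcN_def]
        field_simp
    rw [hS, hD, mul_div_mul_left _ _ hc0]
  rw [hBIG]
  apply hfin.congr
  intro t
  simp only [Function.comp, Rtilde]


end
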